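/- Fix N_s ∈ ℕ with N_s ≥ 1 and δ_s = 2/N_s, and let s_p = (p+1/2)δ_s − 1 for p ∈ {0,…,N_s−1}. Then for every t ∈ [s_0, s_{N_s−1}], Σ_{p=0}^{N_s−1} δ_s · w^pd(t − s_p) · s_p = t; that is, the pixel-driven weights reproduce linear functions exactly on the interval between the first and last detector pixel centers. -/

import Mathlib

open MeasureTheory Real Set Filter

/-- The ray-driven weight function `w^rd(φ, t)` (for spatial resolution `δx`).
Here `κ(φ) = min{1/|cos φ|, 1/|sin φ|}` (with `1/0 = ∞`) is expressed as
`1 / max |cos φ| |sin φ|`, which is the same real number. -/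
noncomputable def rayWeight (δx φ t : ℝ) : ℝ :=
  (1 / δx) *
    (if δx / 2 * |(|Real.cos φ| - |Real.sin φ|)| ≤ |t| ∧
        |t| < δx / 2 * (|Real.cos φ| + |Real.sin φ|) then
      (δx / 2 * (|Real.cos φ| + |Real.sin φ|) - |t|) / (δx * |Real.cos φ * Real.sin φ|)
    else if |t| < δx / 2 * |(|Real.cos φ| - |Real.sin φ|)| then
      1 / max |Real.cos φ| |Real.sin φ|
    else if (φ = 0 ∨ φ = Real.pi / 2) ∧ |t| = δx / 2 * (|Real.cos φ| + |Real.sin φ|) then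
      1 / 2
    else 0)

/-- The pixel-driven weight function `w^pd(t)` (for detector resolution `δs`). -/
noncomputable def pixelWeight (δs t : ℝ) : ℝ := (1 / δs ^ 2) * max (δs - |t|) 0

/-- Detector pixel center `s_p = (p + 1/2) δ_s - 1` with `δ_s = 2/Ns`. -/
noncomputable def sc (Ns p : ℕ) : ℝ := ((p : ℝ) + 1 / 2) * (2 / (Ns : ℝ)) - 1

/-- For `Ns ≥ 1` detector pixels with `δ_s = 2/Ns` and centers
`s_p = (p+1/2)δ_s - 1`: for every `t ∈ [s_0, s_{Ns-1}]`,
`Σ_{p=0}^{Ns-1} δ_s · w^pd(t - s_p) · s_p = t`, i.e. the pixel-driven weights reproduce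
linear functions exactly on the interval between the first and last detector centers. -/
theorem stmt5 (Ns : ℕ) (hNs : 1 ≤ Ns) (t : ℝ)
    (ht : t ∈ Set.Icc (sc Ns 0) (sc Ns (Ns - 1))) :
    ∑ p ∈ Finset.range Ns, (2 / (Ns : ℝ)) * pixelWeight (2 / (Ns : ℝ)) (t - sc Ns p) * sc Ns p
      = t := by
  have hNs0 : (0:ℝ) < (Ns:ℝ) := by exact_mod_cast hNs
  set δ : ℝ := 2 / (Ns : ℝ) with hδdef
  have hδ : 0 < δ := by positivity
  obtain ⟨ht0, ht1⟩ := ht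
  have hsc : ∀ p : ℕ, sc Ns p = sc Ns 0 + p * δ := by
    intro p; simp only [sc, hδdef]; push_cast; ring
  rcases eq_or_lt_of_le hNs with h1 | h2
  · -- Ns = 1
    have hN : Ns = 1 := h1.symm
    subst hN
    have hs0 : sc 1 0 = 0 := by norm_num [sc]
    have ht' : t = 0 := le_antisymm (by simpa [hs0] using ht1) (by simpa [hs0] using ht0)
    simp [hs0, ht']
  · -- Ns ≥ 2
    have hNs2 : 2 ≤ Ns := h2
    set F : ℝ := (t - sc Ns 0) / δ with hF
    have hF0 : 0 ≤ F := div_nonneg (by linarith) hδ.le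
    set k : ℕ := min (Ns - 2) (⌊F⌋.toNat) with hk
    have hk2 : k ≤ Ns - 2 := min_le_left _ _
    have hk1 : k + 1 ≤ Ns - 1 := by omega
    have hkF : (k : ℝ) ≤ F := by
      have : (k : ℝ) ≤ (⌊F⌋.toNat : ℝ) := by exact_mod_cast min_le_right _ _
      have h2' : ((⌊F⌋.toNat : ℤ) : ℝ) ≤ F := by
        rw [Int.toNat_of_nonneg (Int.floor_nonneg.mpr hF0)]
        exact Int.floor_le F
      push_cast at h2' ⊢
      linarith
    have hlow : sc Ns k ≤ t := by
      have : sc Ns 0 + k * δ ≤ sc Ns 0 + F * δ := by nlinarith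
      rw [hsc k]
      have hFδ : F * δ = t - sc Ns 0 := by rw [hF]; field_simp
      linarith [hFδ ▸ this]
    have hhigh : t ≤ sc Ns (k + 1) := by
      rcases le_or_gt (⌊F⌋.toNat) (Ns - 2) with hle | hlt
      · have hkeq : k = ⌊F⌋.toNat := by omega
        have hkz : (k : ℤ) = ⌊F⌋ := by
          rw [hkeq]; exact Int.toNat_of_nonneg (Int.floor_nonneg.mpr hF0)
        have hFlt : F < (k : ℝ) + 1 := by
          have h := Int.lt_floor_add_one F
          rw [← hkz] at h
          push_cast at h
          linarith
        have hFδ : F * δ = t - sc Ns 0 := by rw [hF]; field_simp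
        rw [hsc (k+1)]
        push_cast
        nlinarith
      · have hkeq : k = Ns - 2 := by omega
        have : k + 1 = Ns - 1 := by omega
        rw [this]; exact ht1
    -- zero outside {k, k+1}
    have hzero : ∀ p ∈ Finset.range Ns, p ∉ ({k, k+1} : Finset ℕ) →
        δ * pixelWeight δ (t - sc Ns p) * sc Ns p = 0 := by
      intro p _ hp
      simp only [Finset.mem_insert, Finset.mem_singleton, not_or] at hp
      have habs : δ ≤ |t - sc Ns p| := by
        rcases lt_or_gt_of_ne hp.1 with h | h
        · -- p < k, so p ≤ k - 1, sc p ≤ sc k - δ ≤ t - δ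
          have hpk : (p : ℝ) + 1 ≤ (k : ℝ) := by exact_mod_cast h
          have : sc Ns p + δ ≤ sc Ns k := by
            rw [hsc p, hsc k]; nlinarith
          rw [abs_of_nonneg (by linarith)]
          linarith
        · have hpk : (k : ℝ) + 2 ≤ (p : ℝ) := by
            have : k + 2 ≤ p := by omega
            exact_mod_cast this
          have : sc Ns (k+1) + δ ≤ sc Ns p := by
            rw [hsc p, hsc (k+1)]; push_cast; nlinarith
          rw [abs_of_nonpos (by linarith)]
          linarith
      have : pixelWeight δ (t - sc Ns p) = 0 := by
        simp [pixelWeight, max_eq_right (by linarith : δ - |t - sc Ns p| ≤ 0)]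
      simp [this]
    have hsub : ({k, k+1} : Finset ℕ) ⊆ Finset.range Ns := by
      intro p hp
      simp only [Finset.mem_insert, Finset.mem_singleton] at hp
      rcases hp with rfl | rfl <;> simp [Finset.mem_range] <;> omega
    rw [← Finset.sum_subset hsub hzero, Finset.sum_pair (by omega : k ≠ k + 1)]
    have hsk1 : sc Ns (k+1) = sc Ns k + δ := by rw [hsc (k+1), hsc k]; push_cast; ring
    have e1 : pixelWeight δ (t - sc Ns k) = (1/δ^2) * (δ - (t - sc Ns k)) := by
      rw [pixelWeight, abs_of_nonneg (by linarith), max_eq_left (by rw [hsk1] at hhigh; linarith)]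
    have e2 : pixelWeight δ (t - sc Ns (k+1)) = (1/δ^2) * (δ - (sc Ns (k+1) - t)) := by
      rw [pixelWeight, abs_of_nonpos (by linarith), max_eq_left (by rw [hsk1]; linarith)]
      ring_nf
    rw [e1, e2, hsk1]
    field_simp
    ring
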